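/- arXiv:0810.4322 — 2 statements merged into one kernel-verified Lean document; each statement's English description precedes it below -/
import Mathlib

section
/- Let Ω ⊂ ℝ³ be open with C¹ boundary, and let u, v : closure(Ω) → ℝ³ be C¹ vector fields both vanishing on a relatively open portion Γ of ∂Ω, with u divergence-free. Then at every point of Γ: (a) ε(u)·n · (∂u/∂n) = |ε(u)|², and (b) (ε(v)·n) · (∂u/∂n) = ε(u) : ε(v), where ε(w) = ½(∇w + (∇w)ᵀ), n is the outward unit normal, and A : B = Σᵢⱼ AᵢⱼBᵢⱼ. -/
open scoped BigOperators

/-- Entry `(i,j)` of the stretching tensor `ε(w) = ½(∇w + (∇w)ᵀ)`. -/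
noncomputable def eps (w : (Fin 3 → ℝ) → (Fin 3 → ℝ)) (i j : Fin 3) (x : Fin 3 → ℝ) : ℝ :=
  (fderiv ℝ (fun y => w y i) x (Pi.single j 1)
    + fderiv ℝ (fun y => w y j) x (Pi.single i 1)) / 2

/-- A C¹ function vanishing on `Γ` has gradient parallel to the normal at a point of `Γ`
whose orthogonal complement is contained in the tangent cone. -/
lemma deriv_normal (Γ : Set (Fin 3 → ℝ)) (f : (Fin 3 → ℝ) → ℝ) (x : Fin 3 → ℝ) (hx : x ∈ Γ)
    (hf : DifferentiableAt ℝ f x) (h0 : ∀ y ∈ Γ, f y = 0)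
    (nx : Fin 3 → ℝ) (hn : ∑ i : Fin 3, nx i ^ 2 = 1)
    (htan : ∀ t : Fin 3 → ℝ, (∑ i : Fin 3, t i * nx i) = 0 → t ∈ tangentConeAt ℝ Γ x) :
    ∀ j, fderiv ℝ f x (Pi.single j 1) = nx j * fderiv ℝ f x nx := by
  have h1 : HasFDerivWithinAt f (fderiv ℝ f x) Γ x := hf.hasFDerivAt.hasFDerivWithinAt
  have h2 : HasFDerivWithinAt f (0 : (Fin 3 → ℝ) →L[ℝ] ℝ) Γ x :=
    (hasFDerivWithinAt_const 0 x Γ).congr (fun y hy => h0 y hy) (h0 x hx)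
  have h3 := h1.unique_on h2
  intro j
  have ht : (∑ i : Fin 3, ((Pi.single j 1 : Fin 3 → ℝ) - nx j • nx) i * nx i) = 0 := by
    have : ∀ i : Fin 3, ((Pi.single j 1 : Fin 3 → ℝ) - nx j • nx) i * nx i
        = (Pi.single j 1 : Fin 3 → ℝ) i * nx i - nx j * nx i ^ 2 := by
      intro i; simp [Pi.sub_apply, Pi.smul_apply, smul_eq_mul]; ring
    rw [Finset.sum_congr rfl (fun i _ => this i), Finset.sum_sub_distrib,
      ← Finset.mul_sum, hn, Finset.sum_eq_single j]
    · simp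
    · intro b _ hb; simp [Pi.single_apply, hb]
    · simp
  have h4 := h3 (htan _ ht)
  simp only [map_sub, map_smul, ContinuousLinearMap.zero_apply, smul_eq_mul] at h4
  linarith

/-- The purely algebraic identity underlying both claims. -/
lemma alg_key (c d nn : Fin 3 → ℝ) :
    ∑ i : Fin 3, (∑ j : Fin 3, ((d i * nn j + d j * nn i) / 2) * nn j) * c i
      = ∑ i : Fin 3, ∑ j : Fin 3,
          ((c i * nn j + c j * nn i) / 2) * ((d i * nn j + d j * nn i) / 2) := by
  simp only [Fin.sum_univ_three]
  ring

/-- If `u, v` are C¹ fields vanishing on a relatively open C¹ portion `Γ` of `∂Ω` (with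
outward unit normal `n`, C¹ regularity encoded via the tangent cone), and `u` is
divergence-free, then on `Γ`:
(a) `ε(u)·n · ∂u/∂n = |ε(u)|²` and (b) `ε(v)·n · ∂u/∂n = ε(u) : ε(v)`. -/
theorem eps_normal_identities_on_boundary
    (Ω Γ : Set (Fin 3 → ℝ)) (hΩ : IsOpen Ω)
    (hΓsub : Γ ⊆ frontier Ω)
    (hΓrelopen : ∃ U : Set (Fin 3 → ℝ), IsOpen U ∧ Γ = U ∩ frontier Ω)
    (u v : (Fin 3 → ℝ) → (Fin 3 → ℝ))
    (hu : ContDiff ℝ 1 u) (hv : ContDiff ℝ 1 v)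
    (hdiv : ∀ x ∈ Ω, ∑ i : Fin 3, fderiv ℝ (fun y => u y i) x (Pi.single i 1) = 0)
    (huΓ : ∀ x ∈ Γ, u x = 0) (hvΓ : ∀ x ∈ Γ, v x = 0)
    (n : (Fin 3 → ℝ) → (Fin 3 → ℝ))
    (hn : ∀ x ∈ Γ, ∑ i : Fin 3, (n x i) ^ 2 = 1)
    (htan : ∀ x ∈ Γ, ∀ t : Fin 3 → ℝ,
      (∑ i : Fin 3, t i * n x i) = 0 → t ∈ tangentConeAt ℝ Γ x) :
    ∀ x ∈ Γ,
      (∑ i : Fin 3, (∑ j : Fin 3, eps u i j x * n x j)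
          * fderiv ℝ (fun y => u y i) x (n x)
        = ∑ i : Fin 3, ∑ j : Fin 3, (eps u i j x) ^ 2)
      ∧ (∑ i : Fin 3, (∑ j : Fin 3, eps v i j x * n x j)
          * fderiv ℝ (fun y => u y i) x (n x)
        = ∑ i : Fin 3, ∑ j : Fin 3, eps u i j x * eps v i j x) := by
  intro x hx
  set c : Fin 3 → ℝ := fun i => fderiv ℝ (fun y => u y i) x (n x) with hc
  set d : Fin 3 → ℝ := fun i => fderiv ℝ (fun y => v y i) x (n x) with hd
  have hdu : ∀ i, DifferentiableAt ℝ (fun y => u y i) x := fun i =>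
    differentiableAt_pi.1 (hu.differentiable one_ne_zero x) i
  have hdv : ∀ i, DifferentiableAt ℝ (fun y => v y i) x := fun i =>
    differentiableAt_pi.1 (hv.differentiable one_ne_zero x) i
  have hu0 : ∀ i, ∀ y ∈ Γ, u y i = 0 := fun i y hy => by rw [huΓ y hy]; rfl
  have hv0 : ∀ i, ∀ y ∈ Γ, v y i = 0 := fun i y hy => by rw [hvΓ y hy]; rfl
  have hgradu : ∀ i j, fderiv ℝ (fun y => u y i) x (Pi.single j 1) = n x j * c i := fun i j =>
    deriv_normal Γ _ x hx (hdu i) (hu0 i) (n x) (hn x hx) (htan x hx) j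
  have hgradv : ∀ i j, fderiv ℝ (fun y => v y i) x (Pi.single j 1) = n x j * d i := fun i j =>
    deriv_normal Γ _ x hx (hdv i) (hv0 i) (n x) (hn x hx) (htan x hx) j
  have hepsu : ∀ i j, eps u i j x = (c i * n x j + c j * n x i) / 2 := by
    intro i j; unfold eps; rw [hgradu i j, hgradu j i]; ring
  have hepsv : ∀ i j, eps v i j x = (d i * n x j + d j * n x i) / 2 := by
    intro i j; unfold eps; rw [hgradv i j, hgradv j i]; ring
  constructor
  · calc ∑ i : Fin 3, (∑ j : Fin 3, eps u i j x * n x j) * fderiv ℝ (fun y => u y i) x (n x)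
        = ∑ i : Fin 3, (∑ j : Fin 3, ((c i * n x j + c j * n x i) / 2) * n x j) * c i := by
          simp only [hepsu, hc]
      _ = ∑ i : Fin 3, ∑ j : Fin 3,
            ((c i * n x j + c j * n x i) / 2) * ((c i * n x j + c j * n x i) / 2) :=
          alg_key c c (n x)
      _ = ∑ i : Fin 3, ∑ j : Fin 3, (eps u i j x) ^ 2 := by
          refine Finset.sum_congr rfl fun i _ => Finset.sum_congr rfl fun j _ => ?_
          rw [hepsu]; ring
  · calc ∑ i : Fin 3, (∑ j : Fin 3, eps v i j x * n x j) * fderiv ℝ (fun y => u y i) x (n x)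
        = ∑ i : Fin 3, (∑ j : Fin 3, ((d i * n x j + d j * n x i) / 2) * n x j) * c i := by
          simp only [hepsv, hc]
      _ = ∑ i : Fin 3, ∑ j : Fin 3,
            ((c i * n x j + c j * n x i) / 2) * ((d i * n x j + d j * n x i) / 2) :=
          alg_key c d (n x)
      _ = ∑ i : Fin 3, ∑ j : Fin 3, eps u i j x * eps v i j x := by
          refine Finset.sum_congr rfl fun i _ => Finset.sum_congr rfl fun j _ => ?_
          rw [hepsu, hepsv]
end

section
/- Let β ∈ C²((0,R)×(0,L)) ∩ C¹([0,R]×[0,L]) satisfy −μ(∂²β/∂r² + (3/r)∂β/∂r + ∂²β/∂x₃²) − c(r²−R²)∂β/∂x₃ = 0 in (0,R)×(0,L), with boundary conditions β(r,0)=0, β(R,x₃)=0, ∂β/∂r(0,x₃)=0, and μ ∂β/∂x₃(r,L) + c(r²−R²)β(r,L) = 0, where μ > 0 and c < 0. Then β ≡ 0. -/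
open scoped BigOperators

open Set MeasureTheory

set_option maxHeartbeats 1000000 in
/-- Uniqueness for the degenerate elliptic problem satisfied by `β`:
`−μ(β_rr + (3/r)β_r + β_zz) − c(r²−R²)β_z = 0` in `(0,R)×(0,L)` with
`β(r,0)=0`, `β(R,z)=0`, `β_r(0,z)=0` and the Robin condition
`μ β_z(r,L) + c(r²−R²)β(r,L) = 0`, where `μ>0`, `c<0`, forces `β ≡ 0`. -/
theorem beta_identically_zero
    (μ c R L : ℝ) (hμ : 0 < μ) (hc : c < 0) (hR : 0 < R) (hL : 0 < L)
    (β : ℝ × ℝ → ℝ)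
    (S : Set (ℝ × ℝ)) (hS : S = Set.Icc (0 : ℝ) R ×ˢ Set.Icc (0 : ℝ) L)
    (hβC2 : ContDiffOn ℝ 2 β (Set.Ioo (0 : ℝ) R ×ˢ Set.Ioo (0 : ℝ) L))
    (hβC1 : ContDiffOn ℝ 1 β S)
    (hpde : ∀ p ∈ Set.Ioo (0 : ℝ) R ×ˢ Set.Ioo (0 : ℝ) L,
      -μ * (fderivWithin ℝ (fun q => fderivWithin ℝ β S q (1, 0)) S p (1, 0)
              + (3 / p.1) * fderivWithin ℝ β S p (1, 0)
              + fderivWithin ℝ (fun q => fderivWithin ℝ β S q (0, 1)) S p (0, 1))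
          - c * (p.1 ^ 2 - R ^ 2) * fderivWithin ℝ β S p (0, 1) = 0)
    (hbot : ∀ r ∈ Set.Icc (0 : ℝ) R, β (r, 0) = 0)
    (hlat : ∀ z ∈ Set.Icc (0 : ℝ) L, β (R, z) = 0)
    (haxis : ∀ z ∈ Set.Icc (0 : ℝ) L, fderivWithin ℝ β S (0, z) (1, 0) = 0)
    (hrobin : ∀ r ∈ Set.Ioo (0 : ℝ) R,
      μ * fderivWithin ℝ β S (r, L) (0, 1) + c * (r ^ 2 - R ^ 2) * β (r, L) = 0) :
    ∀ p ∈ S, β p = 0 := by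
  classical
  set T : Set (ℝ × ℝ) := Set.Ioo (0 : ℝ) R ×ˢ Set.Ioo (0 : ℝ) L with hTdef
  have hTopen : IsOpen T := isOpen_Ioo.prod isOpen_Ioo
  have hTS : T ⊆ S := by
    rw [hS]; exact Set.prod_mono Set.Ioo_subset_Icc_self Set.Ioo_subset_Icc_self
  have hTnhds : ∀ p ∈ T, S ∈ nhds p := fun p hp =>
    Filter.mem_of_superset (hTopen.mem_nhds hp) hTS
  have huS : UniqueDiffOn ℝ S := by
    rw [hS]; exact (uniqueDiffOn_Icc hR).prod (uniqueDiffOn_Icc hL)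
  have hclosT : closure T = S := by
    rw [hS, hTdef, closure_prod_eq, closure_Ioo hR.ne, closure_Ioo hL.ne]
  -- first-order derivatives within S
  set A : ℝ × ℝ → ℝ := fun p => fderivWithin ℝ β S p (1, 0) with hAdef
  set B : ℝ × ℝ → ℝ := fun p => fderivWithin ℝ β S p (0, 1) with hBdef
  have hβcont : ContinuousOn β S := hβC1.continuousOn
  have hDcont : ContinuousOn (fun p => fderivWithin ℝ β S p) S :=
    hβC1.continuousOn_fderivWithin huS le_rfl
  have hAcont : ContinuousOn A S := hDcont.clm_apply continuousOn_const
  have hBcont : ContinuousOn B S := hDcont.clm_apply continuousOn_const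
  -- the vector field
  set f : ℝ × ℝ → ℝ := fun q => μ * q.1 ^ 3 * (A q * β q) with hfdef
  set g : ℝ × ℝ → ℝ :=
    fun q => μ * q.1 ^ 3 * (B q * β q) + c / 2 * ((q.1 ^ 2 - R ^ 2) * q.1 ^ 3 * β q ^ 2)
    with hgdef
  set f' : ℝ × ℝ → ℝ × ℝ →L[ℝ] ℝ := fun p => fderiv ℝ f p with hf'def
  set g' : ℝ × ℝ → ℝ × ℝ →L[ℝ] ℝ := fun p => fderiv ℝ g p with hg'def
  set G : ℝ × ℝ → ℝ := fun p => μ * p.1 ^ 3 * (A p ^ 2 + B p ^ 2) with hGdef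
  -- interior differentiability and the divergence identity
  have key : ∀ p ∈ T, HasFDerivAt f (f' p) p ∧ HasFDerivAt g (g' p) p ∧
      f' p (1, 0) + g' p (0, 1) = G p := by
    intro p hp
    have hp1 : (0:ℝ) < p.1 := hp.1.1
    have hSN : S ∈ nhds p := hTnhds p hp
    have hTN : T ∈ nhds p := hTopen.mem_nhds hp
    have hC2at : ContDiffAt ℝ 2 β p := hβC2.contDiffAt hTN
    have hβdiff : DifferentiableAt ℝ β p := hC2at.differentiableAt (by norm_num)
    have hβfd : HasFDerivAt β (fderiv ℝ β p) p := hβdiff.hasFDerivAt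
    have hDat : ContDiffAt ℝ 1 (fderiv ℝ β) p := hC2at.fderiv_right (by norm_num)
    have hDdiff : DifferentiableAt ℝ (fderiv ℝ β) p := hDat.differentiableAt one_ne_zero
    have hDfd : HasFDerivAt (fderiv ℝ β) (fderiv ℝ (fderiv ℝ β) p) p := hDdiff.hasFDerivAt
    set D2 : ℝ × ℝ →L[ℝ] ℝ × ℝ →L[ℝ] ℝ := fderiv ℝ (fderiv ℝ β) p with hD2def
    -- A and B agree near p with the versions using full fderiv
    have hAev : (fun q => fderiv ℝ β q (1, 0)) =ᶠ[nhds p] A := by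
      filter_upwards [hTN] with q hq
      simp only [hAdef]
      rw [fderivWithin_of_mem_nhds (hTnhds q hq)]
    have hBev : (fun q => fderiv ℝ β q (0, 1)) =ᶠ[nhds p] B := by
      filter_upwards [hTN] with q hq
      simp only [hBdef]
      rw [fderivWithin_of_mem_nhds (hTnhds q hq)]
    have hAp : A p = fderiv ℝ β p (1, 0) := by
      simp only [hAdef]; rw [fderivWithin_of_mem_nhds hSN]
    have hBp : B p = fderiv ℝ β p (0, 1) := by
      simp only [hBdef]; rw [fderivWithin_of_mem_nhds hSN]
    -- derivatives of the first-order derivative functions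
    have hAfd : HasFDerivAt (fun q => fderiv ℝ β q (1, 0))
        ((ContinuousLinearMap.apply ℝ ℝ ((1:ℝ), (0:ℝ))).comp D2) p :=
      (ContinuousLinearMap.apply ℝ ℝ ((1:ℝ), (0:ℝ))).hasFDerivAt.comp p hDfd
    have hBfd : HasFDerivAt (fun q => fderiv ℝ β q (0, 1))
        ((ContinuousLinearMap.apply ℝ ℝ ((0:ℝ), (1:ℝ))).comp D2) p :=
      (ContinuousLinearMap.apply ℝ ℝ ((0:ℝ), (1:ℝ))).hasFDerivAt.comp p hDfd
    have hq1 : HasFDerivAt (fun q : ℝ × ℝ => q.1) (ContinuousLinearMap.fst ℝ ℝ ℝ) p :=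
      hasFDerivAt_fst
    -- derivative of f
    have Hf0 := (((hq1.mul hq1).mul hq1).const_mul μ).mul (hAfd.mul hβfd)
    have Hf : HasFDerivAt f _ p := Hf0.congr_of_eventuallyEq (by
      filter_upwards [hAev] with q hq
      simp only [hfdef, ← hq, Pi.mul_apply, Pi.add_apply, Pi.sub_apply, Pi.pow_apply]
      ring)
    -- derivative of g
    have Hg0 := ((((hq1.mul hq1).mul hq1).const_mul μ).mul (hBfd.mul hβfd)).add
      (((((hq1.mul hq1).sub_const (R ^ 2)).mul ((hq1.mul hq1).mul hq1)).mul
        (hβfd.mul hβfd)).const_mul (c / 2))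
    have Hg : HasFDerivAt g _ p := Hg0.congr_of_eventuallyEq (by
      filter_upwards [hBev] with q hq
      simp only [hgdef, ← hq, Pi.mul_apply, Pi.add_apply, Pi.sub_apply, Pi.pow_apply]
      ring)
    refine ⟨Hf.differentiableAt.hasFDerivAt, Hg.differentiableAt.hasFDerivAt, ?_⟩
    simp only [hf'def, hg'def]
    rw [Hf.fderiv, Hg.fderiv]
    -- translate the PDE to full derivatives
    have h2r : fderivWithin ℝ A S p (1, 0) = D2 (1, 0) (1, 0) := by
      rw [fderivWithin_of_mem_nhds hSN, ← hAev.fderiv_eq, hAfd.fderiv]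
      simp
    have h2z : fderivWithin ℝ B S p (0, 1) = D2 (0, 1) (0, 1) := by
      rw [fderivWithin_of_mem_nhds hSN, ← hBev.fderiv_eq, hBfd.fderiv]
      simp
    have hpde' := hpde p hp
    rw [h2r, h2z] at hpde'
    rw [fderivWithin_of_mem_nhds hSN] at hpde'
    -- now everything is in terms of D2 and fderiv β p
    have hp1ne : p.1 ≠ 0 := ne_of_gt hp1
    have hpde'' : μ * (p.1 ^ 3 * (D2 (1, 0) (1, 0)) + 3 * p.1 ^ 2 * fderiv ℝ β p (1, 0)
        + p.1 ^ 3 * (D2 (0, 1) (0, 1)))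
        + c * (p.1 ^ 2 - R ^ 2) * (p.1 ^ 3 * fderiv ℝ β p (0, 1)) = 0 := by
      have h3 : (3 : ℝ) / p.1 * p.1 ^ 3 = 3 * p.1 ^ 2 := by
        field_simp
      linear_combination (-(p.1 ^ 3)) * hpde' -
        (μ * fderiv ℝ β p (1, 0)) * h3
    simp only [hGdef, hAp, hBp]
    simp only [ContinuousLinearMap.add_apply, ContinuousLinearMap.smul_apply,
      ContinuousLinearMap.comp_apply, ContinuousLinearMap.apply_apply,
      ContinuousLinearMap.coe_fst', smul_eq_mul, Pi.mul_apply, Pi.add_apply, Pi.sub_apply, Pi.pow_apply]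
    linear_combination β p * hpde''
  -- continuity of f and g on S
  have hfcont : ContinuousOn f S := by
    apply (continuousOn_const.mul ((continuousOn_fst.pow 3))).mul (hAcont.mul hβcont)
  have hgcont : ContinuousOn g S := by
    apply ContinuousOn.add
    · exact (continuousOn_const.mul ((continuousOn_fst.pow 3))).mul (hBcont.mul hβcont)
    · exact continuousOn_const.mul
        ((((continuousOn_fst.pow 2).sub continuousOn_const).mul
          (continuousOn_fst.pow 3)).mul (hβcont.pow 2))
  -- the boundary of the rectangle is a null set
  have hnull : volume (S \ T) = 0 := by
    have hsub : S \ T ⊆ ((Set.Icc (0:ℝ) R \ Set.Ioo 0 R) ×ˢ Set.Icc (0:ℝ) L) ∪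
        (Set.Icc (0:ℝ) R ×ˢ (Set.Icc (0:ℝ) L \ Set.Ioo 0 L)) := by
      rintro ⟨x, y⟩ ⟨hpS, hpT⟩
      rw [hS] at hpS
      obtain ⟨hx, hy⟩ := hpS
      by_cases hxm : x ∈ Set.Ioo (0:ℝ) R
      · right
        refine ⟨hx, hy, fun hym => hpT ⟨hxm, hym⟩⟩
      · left
        exact ⟨⟨hx, hxm⟩, hy⟩
    refine measure_mono_null hsub (measure_union_null ?_ ?_)
    · rw [Measure.volume_eq_prod, Measure.prod_prod, Set.Icc_diff_Ioo_same hR.le]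
      rw [((Set.finite_singleton R).insert 0).measure_zero volume, zero_mul]
    · rw [Measure.volume_eq_prod, Measure.prod_prod, Set.Icc_diff_Ioo_same hL.le]
      rw [((Set.finite_singleton L).insert 0).measure_zero volume, mul_zero]
  have hSmeas : MeasurableSet S := by
    rw [hS]; exact (measurableSet_Icc.prod measurableSet_Icc)
  have hST_ae : ∀ᵐ x ∂(volume.restrict S), x ∈ T := by
    rw [ae_restrict_iff' hSmeas, MeasureTheory.ae_iff]
    convert hnull using 2
    ext x
    simp only [Set.mem_setOf_eq, Set.mem_diff, Classical.not_imp]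
  -- the divergence agrees a.e. with the continuous function G
  have hGcont : ContinuousOn G S :=
    (continuousOn_const.mul (continuousOn_fst.pow 3)).mul ((hAcont.pow 2).add (hBcont.pow 2))
  have hScompact : IsCompact S := by
    rw [hS]; exact isCompact_Icc.prod isCompact_Icc
  have hGint : IntegrableOn G S := hGcont.integrableOn_compact hScompact
  have hae : (fun x => f' x (1, 0) + g' x (0, 1)) =ᵐ[volume.restrict S] G := by
    filter_upwards [hST_ae] with x hx
    exact (key x hx).2.2
  have Hi : IntegrableOn (fun x => f' x (1, 0) + g' x (0, 1)) S := hGint.congr hae.symm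
  -- apply the divergence theorem
  have hIccS : Set.Icc ((0 : ℝ), (0 : ℝ)) (R, L) = S := by
    rw [hS, Set.Icc_prod_eq]
  have hdiv : (∫ x in S, f' x (1, 0) + g' x (0, 1)) =
      (((∫ x in (0:ℝ)..R, g (x, L)) - ∫ x in (0:ℝ)..R, g (x, 0)) +
          ∫ y in (0:ℝ)..L, f (R, y)) - ∫ y in (0:ℝ)..L, f (0, y) := by
    have hle : ((0:ℝ), (0:ℝ)) ≤ (R, L) := ⟨hR.le, hL.le⟩
    have H := integral_divergence_prod_Icc_of_hasFDerivAt_off_countable_of_le f g f' g'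
      (0, 0) (R, L) hle ∅ Set.countable_empty
      (by rw [hIccS]; exact hfcont) (by rw [hIccS]; exact hgcont)
      (fun x hx => (key x (by simpa [hTdef] using hx.1)).1)
      (fun x hx => (key x (by simpa [hTdef] using hx.1)).2.1)
      (by rw [hIccS]; exact Hi)
    rw [hIccS] at H
    exact H
  -- evaluate the boundary integrals
  have hbot0 : (∫ x in (0:ℝ)..R, g (x, 0)) = 0 := by
    have he : Set.EqOn (fun x => g (x, 0)) (fun _ => (0:ℝ)) (Set.uIcc (0:ℝ) R) := by
      intro x hx
      rw [Set.uIcc_of_le hR.le] at hx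
      have hb := hbot x hx
      simp [hgdef, hb]
    rw [intervalIntegral.integral_congr he, intervalIntegral.integral_const, smul_zero]
  have hlat0 : (∫ y in (0:ℝ)..L, f (R, y)) = 0 := by
    have he : Set.EqOn (fun y => f (R, y)) (fun _ => (0:ℝ)) (Set.uIcc (0:ℝ) L) := by
      intro y hy
      rw [Set.uIcc_of_le hL.le] at hy
      have hb := hlat y hy
      simp [hfdef, hb]
    rw [intervalIntegral.integral_congr he, intervalIntegral.integral_const, smul_zero]
  have haxis0 : (∫ y in (0:ℝ)..L, f (0, y)) = 0 := by
    have he : Set.EqOn (fun y => f (0, y)) (fun _ => (0:ℝ)) (Set.uIcc (0:ℝ) L) := by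
      intro y _
      simp [hfdef]
    rw [intervalIntegral.integral_congr he, intervalIntegral.integral_const, smul_zero]
  have htop : (∫ x in (0:ℝ)..R, g (x, L)) ≤ 0 := by
    have hmaps : Set.MapsTo (fun x : ℝ => (x, L)) (Set.Icc (0:ℝ) R) S := by
      intro x hx
      rw [hS]
      exact ⟨hx, Set.right_mem_Icc.2 hL.le⟩
    have hint : IntervalIntegrable (fun x => g (x, L)) volume 0 R := by
      apply ContinuousOn.intervalIntegrable
      rw [Set.uIcc_of_le hR.le]
      exact hgcont.comp ((continuous_id.prodMk continuous_const).continuousOn) hmaps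
    have hnonpos : ∀ x ∈ Set.Icc (0:ℝ) R, g (x, L) ≤ 0 := by
      intro x hx
      rcases eq_or_lt_of_le hx.1 with h0 | h0
      · simp [hgdef, ← h0]
      rcases eq_or_lt_of_le hx.2 with hRx | hRx
      · have hb := hlat L (Set.right_mem_Icc.2 hL.le)
        rw [hRx]
        simp [hgdef, hb]
      have hrob := hrobin x ⟨h0, hRx⟩
      have hmu : μ * x ^ 3 * (B (x, L) * β (x, L)) =
          x ^ 3 * (-c * (x ^ 2 - R ^ 2) * β (x, L) ^ 2) := by
        have : B (x, L) = fderivWithin ℝ β S (x, L) (0, 1) := rfl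
        linear_combination (x ^ 3 * β (x, L)) * hrob
      have h1 : (0:ℝ) ≤ x ^ 3 * β (x, L) ^ 2 :=
        mul_nonneg (pow_nonneg hx.1 3) (sq_nonneg _)
      have h2 : x ^ 2 ≤ R ^ 2 := by nlinarith [hx.1, hx.2]
      show μ * x ^ 3 * (B (x, L) * β (x, L)) + c / 2 * ((x ^ 2 - R ^ 2) * x ^ 3 * β (x, L) ^ 2) ≤ 0
      rw [hmu]
      nlinarith [mul_nonneg h1 (sub_nonneg.2 h2), hc.le]
    have : 0 ≤ ∫ x in (0:ℝ)..R, -g (x, L) :=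
      intervalIntegral.integral_nonneg hR.le (fun u hu => neg_nonneg.2 (hnonpos u hu))
    rw [intervalIntegral.integral_neg] at this
    linarith
  -- conclude the energy integral vanishes
  have hGnonnegS : ∀ x ∈ S, 0 ≤ G x := by
    intro x hx
    have hx1 : (0:ℝ) ≤ x.1 := by
      rw [hS] at hx
      exact hx.1.1
    exact mul_nonneg (mul_nonneg hμ.le (pow_nonneg hx1 3))
      (add_nonneg (sq_nonneg _) (sq_nonneg _))
  have hGzero : (∫ x in S, G x) = 0 := by
    have hEq : (∫ x in S, f' x (1, 0) + g' x (0, 1)) = ∫ x in S, G x :=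
      integral_congr_ae hae
    have hnonneg : 0 ≤ ∫ x in S, G x := setIntegral_nonneg hSmeas hGnonnegS
    have hle0 : (∫ x in S, G x) ≤ 0 := by
      rw [← hEq, hdiv, hbot0, hlat0, haxis0]
      linarith [htop]
    linarith
  -- hence the gradient vanishes in the interior
  have hGzeroT : ∀ p ∈ T, G p = 0 := by
    intro p hp
    by_contra hne
    have hnn : 0 ≤ᵐ[volume.restrict S] G :=
      (ae_restrict_iff' hSmeas).2 (Filter.Eventually.of_forall hGnonnegS)
    have hiff := setIntegral_pos_iff_support_of_nonneg_ae hnn hGint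
    have hsup0 : volume (Function.support G ∩ S) = 0 := by
      by_contra h0
      have : 0 < volume (Function.support G ∩ S) :=
        lt_of_le_of_ne (zero_le) (Ne.symm h0)
      have := hiff.2 this
      rw [hGzero] at this
      exact lt_irrefl _ this
    have hU : IsOpen (T ∩ G ⁻¹' ({0}ᶜ : Set ℝ)) :=
      (hGcont.mono hTS).isOpen_inter_preimage hTopen isOpen_compl_singleton
    have hpU : p ∈ T ∩ G ⁻¹' ({0}ᶜ : Set ℝ) := ⟨hp, hne⟩
    have hUsub : T ∩ G ⁻¹' ({0}ᶜ : Set ℝ) ⊆ Function.support G ∩ S :=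
      fun x hx => ⟨hx.2, hTS hx.1⟩
    have hpos : 0 < volume (T ∩ G ⁻¹' ({0}ᶜ : Set ℝ)) :=
      hU.measure_pos volume ⟨p, hpU⟩
    exact absurd (measure_mono_null hUsub hsup0) (by exact fun h => lt_irrefl _ (h ▸ hpos))
  have hgradzero : ∀ p ∈ T, fderivWithin ℝ β S p = 0 := by
    intro p hp
    have hG0 := hGzeroT p hp
    have hp1 : (0:ℝ) < p.1 := hp.1.1
    have hsum : A p ^ 2 + B p ^ 2 = 0 := by
      have hpow : (0:ℝ) < μ * p.1 ^ 3 := mul_pos hμ (pow_pos hp1 3)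
      have := mul_eq_zero.1 hG0
      rcases this with h | h
      · exact absurd h (ne_of_gt hpow)
      · exact h
    have hA0 : A p = 0 := by nlinarith [sq_nonneg (A p), sq_nonneg (B p)]
    have hB0 : B p = 0 := by nlinarith [sq_nonneg (A p), sq_nonneg (B p)]
    apply ContinuousLinearMap.ext
    intro v
    have hv : v = v.1 • ((1:ℝ), (0:ℝ)) + v.2 • ((0:ℝ), (1:ℝ)) := by
      ext <;> simp
    rw [hv, (fderivWithin ℝ β S p).map_add, (fderivWithin ℝ β S p).map_smul,
      (fderivWithin ℝ β S p).map_smul]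
    have hA0' : fderivWithin ℝ β S p (1, 0) = 0 := hA0
    have hB0' : fderivWithin ℝ β S p (0, 1) = 0 := hB0
    simp [hA0', hB0']
  -- β is constant on T
  have hconst : ∀ p ∈ T, ∀ q ∈ T, β p = β q := by
    have hTconv : Convex ℝ T := (convex_Ioo _ _).prod (convex_Ioo _ _)
    have hdOn : DifferentiableOn ℝ β T := hβC2.differentiableOn (by norm_num)
    intro p hp q hq
    apply hTconv.is_const_of_fderivWithin_eq_zero hdOn _ hp hq
    intro x hx
    rw [fderivWithin_of_isOpen hTopen hx, ← fderivWithin_of_mem_nhds (hTnhds x hx)]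
    exact hgradzero x hx
  -- the constant is 0
  have hT0 : ∀ p ∈ T, β p = 0 := by
    intro p hp
    have hq0 : ((R / 2 : ℝ), (0 : ℝ)) ∈ closure T := by
      rw [hclosT, hS]
      exact ⟨⟨by linarith, by linarith⟩, Set.left_mem_Icc.2 hL.le⟩
    have hq0S : ((R / 2 : ℝ), (0 : ℝ)) ∈ S := by rw [← hclosT]; exact hq0
    have hne : Filter.NeBot (nhdsWithin ((R / 2 : ℝ), (0 : ℝ)) T) :=
      mem_closure_iff_nhdsWithin_neBot.1 hq0
    have h1 : Filter.Tendsto β (nhdsWithin ((R / 2 : ℝ), (0 : ℝ)) T)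
        (nhds (β ((R / 2 : ℝ), (0 : ℝ)))) :=
      ((hβcont _ hq0S).mono hTS).tendsto
    have hval : β ((R / 2 : ℝ), (0 : ℝ)) = 0 := hbot (R / 2) ⟨by linarith, by linarith⟩
    have h2 : Filter.Tendsto β (nhdsWithin ((R / 2 : ℝ), (0 : ℝ)) T) (nhds (β p)) := by
      apply Filter.Tendsto.congr' _ tendsto_const_nhds
      filter_upwards [self_mem_nhdsWithin] with x hx
      exact hconst p hp x hx
    have := tendsto_nhds_unique h2 h1
    rw [hval] at this
    exact this
  -- extend to S by continuity
  intro p hp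
  have hpcl : p ∈ closure T := by rw [hclosT]; exact hp
  have hne : Filter.NeBot (nhdsWithin p T) := mem_closure_iff_nhdsWithin_neBot.1 hpcl
  have h1 : Filter.Tendsto β (nhdsWithin p T) (nhds (β p)) :=
    ((hβcont p hp).mono hTS).tendsto
  have h2 : Filter.Tendsto β (nhdsWithin p T) (nhds 0) := by
    apply Filter.Tendsto.congr' _ tendsto_const_nhds
    filter_upwards [self_mem_nhdsWithin] with x hx
    exact (hT0 x hx).symm
  exact tendsto_nhds_unique h1 h2
end
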